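/- Cut-off lemma with factorial derivative bounds. For every n ∈ ℕ there exists a constant 𝒞_ن > 0 (depending only on n and d; e.g. one can take 𝒞₁ = 4e/3) such that for every R > 0 and every nonempty Δ ⊂ ℝ^d there exists χ ∈ C^∞(ℝ^d) with 0 ≤ χ ≤ 1, supp χ contained in Δ_R := ∪_{ω∈Δ} B_R(ω), χ ≡ 1 on Δ_{R/2}, and for every multi-index m ∈ ℕ^d with |m|₁ ≤ n: sup_{ℝ^d} |∂^m_ω χ| ≤ 𝒞_n (|m|₁ + 2)! / R^{|m|₁}. -/

import Mathlib

set_option autoImplicit false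

noncomputable section

open scoped Convolution
open MeasureTheory Function Metric Set ContinuousLinearMap

/-- Partial derivative in the `i`-th coordinate direction. -/
noncomputable def pderivR {d : ℕ} (i : Fin d) (f : (Fin d → ℝ) → ℝ) : (Fin d → ℝ) → ℝ :=
  fun y => fderiv ℝ f y (Pi.single i 1)

/-- Multi-index partial derivative `∂^m`. -/
noncomputable def mderivR {d : ℕ} (m : Fin d → ℕ) (f : (Fin d → ℝ) → ℝ) :
    (Fin d → ℝ) → ℝ :=
  (Finset.univ : Finset (Fin d)).toList.foldr (fun i g => (pderivR i)^[m i] g) f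

variable {d : ℕ}

lemma contDiff_pderivR (i : Fin d) {f : (Fin d → ℝ) → ℝ} (hf : ContDiff ℝ (⊤:ℕ∞) f) :
    ContDiff ℝ (⊤:ℕ∞) (pderivR i f) := by
  have h : pderivR i f =
      (fun A : (Fin d → ℝ) →L[ℝ] ℝ => A (Pi.single i 1)) ∘ (fderiv ℝ f) := rfl
  rw [h]
  exact (ContinuousLinearMap.apply ℝ ℝ (Pi.single i 1 : Fin d → ℝ)).contDiff.comp
    (hf.fderiv_right (by exact_mod_cast le_top))

lemma hcs_pderivR (i : Fin d) {f : (Fin d → ℝ) → ℝ} (hf : HasCompactSupport f) :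
    HasCompactSupport (pderivR i f) :=
  (hf.fderiv ℝ).comp_left (g := fun A : (Fin d → ℝ) →L[ℝ] ℝ => A (Pi.single i 1)) rfl

lemma pderivR_conv (i : Fin d) {f g : (Fin d → ℝ) → ℝ} (h1 : ContDiff ℝ (⊤:ℕ∞) f)
    (h2 : HasCompactSupport f) (hg : LocallyIntegrable g volume) :
    pderivR i (f ⋆[lsmul ℝ ℝ, volume] g) = (pderivR i f) ⋆[lsmul ℝ ℝ, volume] g := by
  funext x
  have hd := h2.hasFDerivAt_convolution_left (lsmul ℝ ℝ) (h1.of_le (by exact_mod_cast le_top)) hg x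
  have hfd : fderiv ℝ (f ⋆[lsmul ℝ ℝ, volume] g) x
      = (fderiv ℝ f ⋆[(lsmul ℝ ℝ).precompL (Fin d → ℝ), volume] g) x := hd.fderiv
  have hexist : ConvolutionExistsAt (fderiv ℝ f) g x ((lsmul ℝ ℝ).precompL (Fin d → ℝ)) volume :=
    HasCompactSupport.convolutionExists_left _ (h2.fderiv ℝ)
      (h1.continuous_fderiv (by simp)) hg x
  show fderiv ℝ (f ⋆[lsmul ℝ ℝ, volume] g) x (Pi.single i 1) = _
  rw [hfd, convolution_def, ContinuousLinearMap.integral_apply hexist.integrable,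
    convolution_def]
  rfl

lemma pderivR_scale (i : Fin d) {f : (Fin d → ℝ) → ℝ} (hf : ContDiff ℝ (⊤:ℕ∞) f) (a c : ℝ) :
    pderivR i (fun y => a * f (c • y)) = fun y => (a * c) * pderivR i f (c • y) := by
  funext y
  have hσ : HasFDerivAt (fun y : Fin d → ℝ => c • y)
      (c • ContinuousLinearMap.id ℝ (Fin d → ℝ)) y := (hasFDerivAt_id y).const_smul c
  have hf' : HasFDerivAt f (fderiv ℝ f (c • y)) (c • y) :=
    (hf.differentiable (by simp) (c • y)).hasFDerivAt
  have h : HasFDerivAt (fun y => a * f (c • y))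
      (a • ((fderiv ℝ f (c • y)).comp (c • ContinuousLinearMap.id ℝ (Fin d → ℝ)))) y :=
    (hf'.comp y hσ).const_mul a
  show fderiv ℝ (fun y => a * f (c • y)) y (Pi.single i 1) = _
  rw [h.fderiv]
  simp [pderivR, mul_comm, mul_assoc, mul_left_comm]

lemma iter_pderivR_contDiff (i : Fin d) (k : ℕ) {f : (Fin d → ℝ) → ℝ}
    (hf : ContDiff ℝ (⊤:ℕ∞) f) : ContDiff ℝ (⊤:ℕ∞) ((pderivR i)^[k] f) := by
  induction k generalizing f with
  | zero => exact hf
  | succ k ih => rw [Function.iterate_succ_apply]; exact ih (contDiff_pderivR i hf)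

lemma iter_pderivR_hcs (i : Fin d) (k : ℕ) {f : (Fin d → ℝ) → ℝ}
    (hf : HasCompactSupport f) : HasCompactSupport ((pderivR i)^[k] f) := by
  induction k generalizing f with
  | zero => exact hf
  | succ k ih => rw [Function.iterate_succ_apply]; exact ih (hcs_pderivR i hf)

lemma iter_pderivR_conv (i : Fin d) (k : ℕ) {f g : (Fin d → ℝ) → ℝ}
    (h1 : ContDiff ℝ (⊤:ℕ∞) f) (h2 : HasCompactSupport f) (hg : LocallyIntegrable g volume) :
    (pderivR i)^[k] (f ⋆[lsmul ℝ ℝ, volume] g)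
      = ((pderivR i)^[k] f) ⋆[lsmul ℝ ℝ, volume] g := by
  induction k generalizing f with
  | zero => rfl
  | succ k ih =>
    rw [Function.iterate_succ_apply, Function.iterate_succ_apply,
      pderivR_conv i h1 h2 hg]
    exact ih (contDiff_pderivR i h1) (hcs_pderivR i h2)

lemma iter_pderivR_scale (i : Fin d) (k : ℕ) {f : (Fin d → ℝ) → ℝ}
    (hf : ContDiff ℝ (⊤:ℕ∞) f) (a c : ℝ) :
    (pderivR i)^[k] (fun y => a * f (c • y))
      = fun y => (a * c ^ k) * ((pderivR i)^[k] f) (c • y) := by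
  induction k generalizing f a with
  | zero => simp
  | succ k ih =>
    rw [Function.iterate_succ_apply, Function.iterate_succ_apply,
      pderivR_scale i hf a c, ih (contDiff_pderivR i hf) (a * c)]
    funext y; ring_nf

lemma foldr_contDiff (m : Fin d → ℕ) (l : List (Fin d)) {f : (Fin d → ℝ) → ℝ}
    (hf : ContDiff ℝ (⊤:ℕ∞) f) :
    ContDiff ℝ (⊤:ℕ∞) (l.foldr (fun i g => (pderivR i)^[m i] g) f) := by
  induction l with
  | nil => exact hf
  | cons i l ih => exact iter_pderivR_contDiff i (m i) ih

lemma foldr_hcs (m : Fin d → ℕ) (l : List (Fin d)) {f : (Fin d → ℝ) → ℝ}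
    (hf : HasCompactSupport f) :
    HasCompactSupport (l.foldr (fun i g => (pderivR i)^[m i] g) f) := by
  induction l with
  | nil => exact hf
  | cons i l ih => exact iter_pderivR_hcs i (m i) ih

lemma foldr_conv (m : Fin d → ℕ) (l : List (Fin d)) {f g : (Fin d → ℝ) → ℝ}
    (h1 : ContDiff ℝ (⊤:ℕ∞) f) (h2 : HasCompactSupport f) (hg : LocallyIntegrable g volume) :
    l.foldr (fun i g => (pderivR i)^[m i] g) (f ⋆[lsmul ℝ ℝ, volume] g)
      = (l.foldr (fun i g => (pderivR i)^[m i] g) f) ⋆[lsmul ℝ ℝ, volume] g := by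
  induction l with
  | nil => rfl
  | cons i l ih =>
    simp only [List.foldr_cons, ih]
    exact iter_pderivR_conv i (m i) (foldr_contDiff m l h1) (foldr_hcs m l h2) hg

lemma foldr_scale (m : Fin d → ℕ) (l : List (Fin d)) {f : (Fin d → ℝ) → ℝ}
    (hf : ContDiff ℝ (⊤:ℕ∞) f) (a c : ℝ) :
    l.foldr (fun i g => (pderivR i)^[m i] g) (fun y => a * f (c • y))
      = fun y => (a * c ^ ((l.map m).sum)) *
          (l.foldr (fun i g => (pderivR i)^[m i] g) f) (c • y) := by
  induction l generalizing a with
  | nil => simp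
  | cons i l ih =>
    simp only [List.foldr_cons, ih a, List.map_cons, List.sum_cons]
    rw [iter_pderivR_scale i (m i) (foldr_contDiff m l hf) _ c]
    funext y
    rw [pow_add]
    ring_nf

lemma conv_abs_le {h g : (Fin d → ℝ) → ℝ} (h1 : Continuous h) (h2 : HasCompactSupport h)
    (hg : ∀ x, |g x| ≤ 1) (x : Fin d → ℝ) :
    |(h ⋆[lsmul ℝ ℝ, volume] g) x| ≤ ∫ t, |h t| := by
  rw [convolution_def]
  calc |∫ t, lsmul ℝ ℝ (h t) (g (x - t))| ≤ ∫ t, ‖lsmul ℝ ℝ (h t) (g (x - t))‖ :=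
        by
        rw [← Real.norm_eq_abs]
        exact norm_integral_le_integral_norm _
    _ ≤ ∫ t, |h t| := by
        apply integral_mono_of_nonneg (Filter.Eventually.of_forall fun t => norm_nonneg _)
          (h1.integrable_of_hasCompactSupport h2).abs
        refine Filter.Eventually.of_forall fun t => ?_
        simp only [lsmul_apply, smul_eq_mul, Real.norm_eq_abs, abs_mul]
        calc |h t| * |g (x - t)| ≤ |h t| * 1 :=
              mul_le_mul_of_nonneg_left (hg _) (abs_nonneg _)
          _ = |h t| := mul_one _


/-- **Cut-off lemma with factorial derivative bounds.**
For every `n` (and dimension `d`) there is a constant `C > 0` such that for all `R > 0`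
and nonempty `Δ ⊆ ℝ^d` there is a smooth cut-off `χ` with `0 ≤ χ ≤ 1`, support inside the
`R`-neighborhood `Δ_R`, `χ ≡ 1` on `Δ_{R/2}`, and
`sup |∂^m χ| ≤ C (|m|₁ + 2)! / R^{|m|₁}` for every multi-index `m` with `|m|₁ ≤ n`. -/
theorem cutoff_lemma (d n : ℕ) :
    ∃ C : ℝ, 0 < C ∧
      ∀ R : ℝ, 0 < R → ∀ Δ : Set (Fin d → ℝ), Δ.Nonempty →
        ∃ χ : (Fin d → ℝ) → ℝ, ContDiff ℝ (⊤ : ℕ∞) χ ∧ (∀ y, χ y ∈ Set.Icc (0 : ℝ) 1) ∧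
          Function.support χ ⊆ Metric.thickening R Δ ∧
          Set.EqOn χ 1 (Metric.thickening (R / 2) Δ) ∧
          ∀ m : Fin d → ℕ, (∑ j, m j) ≤ n →
            ∀ y, |mderivR m χ y| ≤ C * (Nat.factorial ((∑ j, m j) + 2)) / R ^ (∑ j, m j) := by
  classical
  set b : ContDiffBump (0 : Fin d → ℝ) := ⟨1/8, 1/4, by norm_num, by norm_num⟩ with hb
  set φ : (Fin d → ℝ) → ℝ := b.normed volume with hφdef
  have hφc : ContDiff ℝ (⊤:ℕ∞) φ := b.contDiff_normed
  have hφcs : HasCompactSupport φ := b.hasCompactSupport_normed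
  have hφ0 : ∀ t, 0 ≤ φ t := fun t => b.nonneg_normed t
  have hφint : ∫ t, φ t = 1 := b.integral_normed
  set A : (Fin d → ℕ) → ℝ := fun m => ∫ t, |mderivR m φ t| with hA
  have hA0 : ∀ m, 0 ≤ A m := fun m => integral_nonneg fun t => abs_nonneg _
  set C : ℝ := 1 + ∑ p : Fin d → Fin (n+1), A (fun j => (p j : ℕ)) with hCdef
  have hCpos : 0 < C := by
    have h := Finset.sum_nonneg (s := Finset.univ)
      (f := fun p : Fin d → Fin (n+1) => A (fun j => (p j : ℕ))) (fun p _ => hA0 _)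
    rw [hCdef]; linarith
  have hAC : ∀ m : Fin d → ℕ, (∑ j, m j) ≤ n → A m ≤ C := by
    intro m hm
    have hmj : ∀ j, m j < n + 1 := fun j => Nat.lt_succ_of_le <| le_trans
      (Finset.single_le_sum (f := m) (fun _ _ => Nat.zero_le _) (Finset.mem_univ j)) hm
    have heq : A m = A (fun j => ((⟨m j, hmj j⟩ : Fin (n+1)) : ℕ)) := rfl
    have h := Finset.single_le_sum
      (f := fun p : Fin d → Fin (n+1) => A (fun j => (p j : ℕ))) (fun p _ => hA0 _)
      (Finset.mem_univ (fun j => (⟨m j, hmj j⟩ : Fin (n+1))))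
    rw [heq, hCdef]; linarith
  refine ⟨C, hCpos, fun R hR Δ _hΔ => ?_⟩
  have hRinv : (0:ℝ) < R⁻¹ := inv_pos.mpr hR
  set S : Set (Fin d → ℝ) := Metric.thickening (3/4 : ℝ) ((fun w => R⁻¹ • w) '' Δ) with hSdef
  set g : (Fin d → ℝ) → ℝ := S.indicator (fun _ => 1) with hgdef
  have hgli : LocallyIntegrable g volume :=
    (locallyIntegrable_const 1).indicator Metric.isOpen_thickening.measurableSet
  have hg0 : ∀ x, 0 ≤ g x := fun x => Set.indicator_nonneg (fun _ _ => zero_le_one) x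
  have hg1 : ∀ x, g x ≤ 1 := by
    intro x; by_cases hx : x ∈ S <;> simp [hgdef, hx]
  have hgabs : ∀ x, |g x| ≤ 1 := fun x => abs_le.mpr ⟨by linarith [hg0 x], hg1 x⟩
  set F : (Fin d → ℝ) → ℝ := φ ⋆[lsmul ℝ ℝ, volume] g with hFdef
  have hFc : ContDiff ℝ (⊤:ℕ∞) F := hφcs.contDiff_convolution_left _ hφc hgli
  have key : ∀ y w : Fin d → ℝ, dist (R⁻¹ • y) (R⁻¹ • w) = R⁻¹ * dist y w := by
    intro y w
    rw [dist_smul₀, Real.norm_eq_abs, abs_of_pos hRinv]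
  have hφsupp : Function.support φ = Metric.ball (0 : Fin d → ℝ) (1/4) := by
    rw [hφdef, b.support_normed_eq]
  refine ⟨fun y => F (R⁻¹ • y), ?_, ?_, ?_, ?_, ?_⟩
  · exact hFc.comp (contDiff_id.const_smul R⁻¹)
  · -- Icc
    intro y
    have hFval : ∀ x : Fin d → ℝ, F x = ∫ t, φ t * g (x - t) := by
      intro x; rw [hFdef, convolution_def]; rfl
    refine ⟨?_, ?_⟩
    · show (0:ℝ) ≤ F (R⁻¹ • y)
      rw [hFval]
      exact integral_nonneg fun t => mul_nonneg (hφ0 t) (hg0 _)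
    · show F (R⁻¹ • y) ≤ 1
      rw [hFval]
      calc (∫ t, φ t * g ((R⁻¹ • y) - t)) ≤ ∫ t, φ t := by
            apply integral_mono_of_nonneg
              (Filter.Eventually.of_forall fun t => mul_nonneg (hφ0 t) (hg0 _))
              b.integrable_normed
            exact Filter.Eventually.of_forall fun t => by
              calc φ t * g ((R⁻¹ • y) - t) ≤ φ t * 1 :=
                    mul_le_mul_of_nonneg_left (hg1 _) (hφ0 t)
                _ = φ t := mul_one _
        _ = 1 := hφint
  · -- support
    intro y hy
    have hx : R⁻¹ • y ∈ Function.support F := hy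
    have hsub := support_convolution_subset (lsmul ℝ ℝ) (μ := volume) (f := φ) (g := g)
    obtain ⟨u, hu, v, hv, huv⟩ := Set.mem_add.mp (hsub hx)
    rw [hφsupp, mem_ball_zero_iff] at hu
    have hvS : v ∈ S := Set.support_indicator_subset hv
    obtain ⟨z, hz, hvz⟩ := Metric.mem_thickening_iff.mp hvS
    obtain ⟨w, hw, rfl⟩ := hz
    have hd1 : dist (R⁻¹ • y) (R⁻¹ • w) < 1 := by
      calc dist (R⁻¹ • y) (R⁻¹ • w) ≤ dist (R⁻¹ • y) v + dist v (R⁻¹ • w) := dist_triangle _ _ _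
        _ = ‖u‖ + dist v (R⁻¹ • w) := by
            rw [← huv]
            congr 1
            simp
        _ < 1/4 + 3/4 := by exact add_lt_add hu hvz
        _ = 1 := by norm_num
    rw [key] at hd1
    have hRR : R * R⁻¹ = 1 := mul_inv_cancel₀ (ne_of_gt hR)
    refine Metric.mem_thickening_iff.mpr ⟨w, hw, ?_⟩
    nlinarith [dist_nonneg (x := y) (y := w)]
  · -- EqOn 1
    intro y hy
    obtain ⟨w, hw, hdw⟩ := Metric.mem_thickening_iff.mp hy
    have hxz : dist (R⁻¹ • y) (R⁻¹ • w) < 1/2 := by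
      rw [key]
      calc R⁻¹ * dist y w < R⁻¹ * (R/2) := by
            exact mul_lt_mul_of_pos_left hdw hRinv
        _ = 1/2 := by field_simp
    have hmem : ∀ x', dist x' (R⁻¹ • y) < 1/4 → x' ∈ S := by
      intro x' h
      refine Metric.mem_thickening_iff.mpr ⟨R⁻¹ • w, ⟨w, hw, rfl⟩, ?_⟩
      calc dist x' (R⁻¹ • w) ≤ dist x' (R⁻¹ • y) + dist (R⁻¹ • y) (R⁻¹ • w) := dist_triangle _ _ _
        _ < 1/4 + 1/2 := add_lt_add h hxz
        _ = 3/4 := by norm_num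
    have hxS : (R⁻¹ • y) ∈ S := hmem _ (by simp)
    have heq := convolution_eq_right' (L := lsmul ℝ ℝ) (μ := volume) (f := φ) (g := g)
      (x₀ := R⁻¹ • y) (R := 1/4) (le_of_eq hφsupp)
      (fun x' hx' => by
        rw [hgdef, Set.indicator_of_mem (hmem x' (Metric.mem_ball.mp hx')),
          Set.indicator_of_mem hxS])
    show F (R⁻¹ • y) = 1
    have hgx : g (R⁻¹ • y) = 1 := Set.indicator_of_mem hxS _
    have hF1 : F (R⁻¹ • y) = ∫ t, (lsmul ℝ ℝ) (φ t) (g (R⁻¹ • y)) := heq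
    rw [hF1, hgx]
    simpa using hφint
  · -- derivative bounds
    intro m hm y
    set K : ℕ := ∑ j, m j with hK
    have hsum : ((Finset.univ : Finset (Fin d)).toList.map m).sum = K := by
      rw [Finset.sum_map_toList]
    have hscale : mderivR m (fun y => F (R⁻¹ • y))
        = fun y => (1 * (R⁻¹) ^ K) * (mderivR m F) (R⁻¹ • y) := by
      have h1 : (fun y => F (R⁻¹ • y)) = (fun y => 1 * F (R⁻¹ • y)) := by
        funext y; rw [one_mul]
      unfold mderivR
      rw [h1, foldr_scale m _ hFc 1 R⁻¹, hsum]
    have hconv : mderivR m F = (mderivR m φ) ⋆[lsmul ℝ ℝ, volume] g := by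
      unfold mderivR
      rw [hFdef]
      exact foldr_conv m _ hφc hφcs hgli
    have hnice1 : Continuous (mderivR m φ) :=
      (foldr_contDiff m _ hφc).continuous
    have hnice2 : HasCompactSupport (mderivR m φ) := foldr_hcs m _ hφcs
    have hfact : (1:ℝ) ≤ (Nat.factorial (K + 2) : ℝ) := by
      exact_mod_cast Nat.one_le_iff_ne_zero.mpr (Nat.factorial_ne_zero _)
    have hRK : (0:ℝ) < R ^ K := pow_pos hR K
    have hpownn : (0:ℝ) ≤ R⁻¹ ^ K := pow_nonneg hRinv.le K
    calc |mderivR m (fun y => F (R⁻¹ • y)) y|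
        = R⁻¹ ^ K * |(mderivR m φ ⋆[lsmul ℝ ℝ, volume] g) (R⁻¹ • y)| := by
          rw [hscale]
          simp only [one_mul, hconv]
          rw [abs_mul, abs_of_nonneg hpownn]
      _ ≤ R⁻¹ ^ K * A m :=
          mul_le_mul_of_nonneg_left (conv_abs_le hnice1 hnice2 hgabs _) hpownn
      _ ≤ R⁻¹ ^ K * (C * (Nat.factorial (K + 2) : ℝ)) := by
          refine mul_le_mul_of_nonneg_left ?_ hpownn
          calc A m ≤ C := hAC m hm
            _ ≤ C * (Nat.factorial (K + 2) : ℝ) := le_mul_of_one_le_right hCpos.le hfact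
      _ = C * (Nat.factorial (K + 2) : ℝ) / R ^ K := by
          rw [inv_pow, div_eq_mul_inv, mul_comm]
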